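/- Let H > 1, n ≥ 1, and let b_1, ..., b_n be i.i.d. random variables each with ℙ(b_i > y) = 1/y for y ∈ [1,H) and ℙ(b_i = H) = 1/H. Suppose for each i a price P_i (a random variable independent of b_i) is offered, and bidder i pays P_i if b_i > P_i and 0 otherwise. Then the expected total revenue is at most n, while E[∑_i b_i] = n·(ln(H)+1). Hence the expected revenue is at most E[OPT]/(ln(H)+1), and there exists a realization of the bids on which the revenue is at most OPT/(ln(H)+1). -/

import Mathlib

open MeasureTheory ProbabilityTheory

-- per-bidder revenue bound
lemma rev_le_one {Ω : Type*} [MeasurableSpace Ω] (μ : Measure Ω) [IsProbabilityMeasure μ]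
    (H : ℝ) (hH : 1 < H) (X Y : Ω → ℝ) (hX : Measurable X) (hY : Measurable Y)
    (hrange : ∀ ω, X ω ∈ Set.Icc (1:ℝ) H)
    (htail : ∀ y ∈ Set.Ico (1:ℝ) H, μ {ω | y < X ω} = ENNReal.ofReal (1/y))
    (hYpos : ∀ ω, 0 ≤ Y ω)
    (hind : IndepFun X Y μ) :
    ∫ ω, (if Y ω < X ω then Y ω else 0) ∂μ ≤ 1 := by
  set f : ℝ × ℝ → ℝ := fun p => if p.2 < p.1 then p.2 else 0 with hf
  have hfm : Measurable f := by
    apply Measurable.ite _ measurable_snd measurable_const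
    exact measurableSet_lt measurable_snd measurable_fst
  have hZm : Measurable (fun ω => if Y ω < X ω then Y ω else 0) :=
    hfm.comp (hX.prodMk hY)
  have hZnn : ∀ ω, 0 ≤ (if Y ω < X ω then Y ω else 0) := by
    intro ω; split <;> [exact hYpos ω; rfl]
  have key : ∫⁻ ω, ENNReal.ofReal (if Y ω < X ω then Y ω else 0) ∂μ ≤ 1 := by
    have hmap : (∫⁻ p, ENNReal.ofReal (f p) ∂(μ.map (fun ω => (X ω, Y ω))))
        = ∫⁻ ω, ENNReal.ofReal (if Y ω < X ω then Y ω else 0) ∂μ :=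
      lintegral_map hfm.ennreal_ofReal (hX.prodMk hY)
    rw [← hmap,
      (indepFun_iff_map_prod_eq_prod_map_map hX.aemeasurable hY.aemeasurable).1 hind]
    haveI : IsProbabilityMeasure (μ.map X) := Measure.isProbabilityMeasure_map hX.aemeasurable
    haveI : IsProbabilityMeasure (μ.map Y) := Measure.isProbabilityMeasure_map hY.aemeasurable
    rw [lintegral_prod_symm (fun p => ENNReal.ofReal (f p)) hfm.ennreal_ofReal.aemeasurable]
    calc ∫⁻ y, ∫⁻ x, ENNReal.ofReal (f (x, y)) ∂(μ.map X) ∂(μ.map Y)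
        ≤ ∫⁻ _, 1 ∂(μ.map Y) := by
          apply lintegral_mono
          intro y
          show ∫⁻ x, ENNReal.ofReal (f (x, y)) ∂(μ.map X) ≤ 1
          have hin : (fun x => ENNReal.ofReal (f (x, y)))
              = (Set.Ioi y).indicator (fun _ => ENNReal.ofReal y) := by
            funext x
            simp only [f, Set.indicator]
            by_cases h : y < x <;> simp [h, Set.mem_Ioi]
          rw [hin]
          show ∫⁻ x, ((Set.Ioi y).indicator (fun _ => ENNReal.ofReal y)) x ∂(μ.map X) ≤ 1
          rw [lintegral_indicator measurableSet_Ioi, setLIntegral_const]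
          have hIoi : (μ.map X) (Set.Ioi y) = μ {ω | y < X ω} := by
            rw [Measure.map_apply hX measurableSet_Ioi]; rfl
          rcases lt_or_ge y 1 with h1 | h1
          · calc ENNReal.ofReal y * (μ.map X) (Set.Ioi y)
                ≤ ENNReal.ofReal y * 1 := mul_le_mul_right prob_le_one _
              _ ≤ 1 := by
                  rw [mul_one]
                  exact ENNReal.ofReal_le_one.mpr h1.le
          rcases lt_or_ge y H with h2 | h2
          · rw [hIoi, htail y ⟨h1, h2⟩, ← ENNReal.ofReal_mul (by linarith)]
            rw [mul_one_div, div_self (by linarith)]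
            simp
          · have hz : μ {ω | y < X ω} = 0 := by
              have he : {ω | y < X ω} = ∅ := by
                ext ω
                simp only [Set.mem_setOf_eq, Set.mem_empty_iff_false, iff_false, not_lt]
                exact le_trans (hrange ω).2 h2
              simp [he]
            rw [hIoi, hz, mul_zero]
            exact zero_le_one
      _ = 1 := by simp
  rw [integral_eq_lintegral_of_nonneg_ae (Filter.Eventually.of_forall hZnn)
    hZm.aestronglyMeasurable]
  exact ENNReal.toReal_le_of_le_ofReal zero_le_one (by simpa using key)

-- expectation of a bid
lemma exp_bid {Ω : Type*} [MeasurableSpace Ω] (μ : Measure Ω) [IsProbabilityMeasure μ]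
    (H : ℝ) (hH : 1 < H) (X : Ω → ℝ) (hX : Measurable X)
    (hrange : ∀ ω, X ω ∈ Set.Icc (1:ℝ) H)
    (htail : ∀ y ∈ Set.Ico (1:ℝ) H, μ {ω | y < X ω} = ENNReal.ofReal (1/y)) :
    ∫ ω, X ω ∂μ = Real.log H + 1 := by
  have hXnn : ∀ ω, (0:ℝ) ≤ X ω := fun ω => le_trans zero_le_one (hrange ω).1
  rw [integral_eq_lintegral_of_nonneg_ae (Filter.Eventually.of_forall hXnn)
    hX.aestronglyMeasurable]
  rw [lintegral_eq_lintegral_meas_lt μ (Filter.Eventually.of_forall hXnn) hX.aemeasurable]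
  have hsplit : Set.Ioi (0:ℝ) = Set.Ioo 0 1 ∪ (Set.Ico 1 H ∪ Set.Ici H) := by
    rw [Set.Ico_union_Ici_eq_Ici hH.le, Set.Ioo_union_Ici_eq_Ioi zero_lt_one]
  have hd1 : Disjoint (Set.Ioo (0:ℝ) 1) (Set.Ico 1 H ∪ Set.Ici H) := by
    rw [Set.Ico_union_Ici_eq_Ici hH.le]
    apply Set.disjoint_left.mpr
    rintro t ⟨_, h2⟩ h3
    exact absurd h3 (not_le.mpr h2)
  have hd2 : Disjoint (Set.Ico (1:ℝ) H) (Set.Ici H) := by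
    apply Set.disjoint_left.mpr
    rintro t ⟨_, h2⟩ h3
    exact absurd h3 (not_le.mpr h2)
  rw [hsplit, lintegral_union ((measurableSet_Ico).union measurableSet_Ici) hd1,
    lintegral_union measurableSet_Ici hd2]
  have e1 : ∫⁻ t in Set.Ioo (0:ℝ) 1, μ {a | t < X a} = 1 := by
    have hc : ∀ t ∈ Set.Ioo (0:ℝ) 1, μ {a | t < X a} = 1 := by
      intro t ht
      have : {a | t < X a} = Set.univ := by
        ext ω
        simp only [Set.mem_setOf_eq, Set.mem_univ, iff_true]
        exact lt_of_lt_of_le ht.2 (hrange ω).1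
      rw [this]; simp
    rw [setLIntegral_congr_fun measurableSet_Ioo hc]
    simp [Real.volume_Ioo]
  have e2 : ∫⁻ t in Set.Ico (1:ℝ) H, μ {a | t < X a} = ENNReal.ofReal (Real.log H) := by
    have hcong : ∀ t ∈ Set.Ico (1:ℝ) H, μ {a | t < X a} = ENNReal.ofReal (1/t) :=
      fun t ht => htail t ht
    rw [setLIntegral_congr_fun measurableSet_Ico hcong]
    have hint : IntegrableOn (fun t => 1/t) (Set.Ico (1:ℝ) H) := by
      apply (ContinuousOn.integrableOn_compact isCompact_Icc ?_).mono_set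
        Set.Ico_subset_Icc_self
      exact continuousOn_const.div continuousOn_id
        (fun t ht => by have h1 : (1:ℝ) ≤ t := ht.1; positivity)
    rw [← ofReal_integral_eq_lintegral_ofReal hint
      (ae_restrict_of_forall_mem measurableSet_Ico (fun t ht => by have h1 : (1:ℝ) ≤ t := ht.1; positivity))]
    congr 1
    rw [MeasureTheory.integral_Ico_eq_integral_Ioo, ← MeasureTheory.integral_Ioc_eq_integral_Ioo,
      ← intervalIntegral.integral_of_le hH.le,
      integral_one_div (by
        intro h
        rcases Set.mem_uIcc.mp h with ⟨h1, h2⟩ | ⟨h1, h2⟩ <;> linarith)]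
    rw [div_one]
  have e3 : ∫⁻ t in Set.Ici H, μ {a | t < X a} = 0 := by
    have hc : ∀ t ∈ Set.Ici (H:ℝ), μ {a | t < X a} = 0 := by
      intro t ht
      have : {a | t < X a} = ∅ := by
        ext ω
        simp only [Set.mem_setOf_eq, Set.mem_empty_iff_false, iff_false, not_lt]
        exact le_trans (hrange ω).2 ht
      simp [this]
    rw [setLIntegral_congr_fun measurableSet_Ici hc]
    simp
  rw [e1, e2, e3, add_zero]
  have hlog : 0 ≤ Real.log H := Real.log_nonneg hH.le
  rw [← ENNReal.ofReal_one, ← ENNReal.ofReal_add zero_le_one hlog,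
    ENNReal.toReal_ofReal (by linarith)]
  ring

/-- Lower bound for bid-independent auctions on `[1,H]`: with i.i.d. bids with tail
`ℙ(b_i > y) = 1/y` on `[1,H)`, `ℙ(b_i = H) = 1/H`, and prices `P_i` independent of
`b_i`, the expected total revenue is at most `n`, the expected optimal revenue is
`n·(log H + 1)`, and some realization has revenue at most `OPT/(log H + 1)`. -/
theorem stmt_16 {Ω : Type*} [MeasurableSpace Ω] (μ : Measure Ω)
    [IsProbabilityMeasure μ] (H : ℝ) (hH : 1 < H) (n : ℕ) (hn : 1 ≤ n)
    (b P : Fin n → Ω → ℝ)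
    (hbmeas : ∀ i, Measurable (b i)) (hPmeas : ∀ i, Measurable (P i))
    (hiid : iIndepFun b μ)
    (hrange : ∀ i ω, b i ω ∈ Set.Icc (1 : ℝ) H)
    (htail : ∀ i, ∀ y ∈ Set.Ico (1 : ℝ) H, μ {ω | y < b i ω} = ENNReal.ofReal (1 / y))
    (hatom : ∀ i, μ {ω | b i ω = H} = ENNReal.ofReal (1 / H))
    (hPpos : ∀ i ω, 0 ≤ P i ω)
    (hindep : ∀ i, IndepFun (b i) (P i) μ) :
    (∫ ω, ∑ i, (if P i ω < b i ω then P i ω else 0) ∂μ) ≤ n ∧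
    (∫ ω, ∑ i, b i ω ∂μ) = n * (Real.log H + 1) ∧
    ∃ ω, (∑ i, (if P i ω < b i ω then P i ω else 0))
        ≤ (∑ i, b i ω) / (Real.log H + 1) := by
  have hrevm : ∀ i, Measurable (fun ω => if P i ω < b i ω then P i ω else 0) := fun i =>
    Measurable.ite (measurableSet_lt (hPmeas i) (hbmeas i)) (hPmeas i) measurable_const
  have hrevnn : ∀ i ω, 0 ≤ (if P i ω < b i ω then P i ω else 0) := by
    intro i ω; split <;> [exact hPpos i ω; rfl]
  have hrevbd : ∀ i ω, |if P i ω < b i ω then P i ω else 0| ≤ H := by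
    intro i ω
    rw [abs_of_nonneg (hrevnn i ω)]
    rcases lt_or_ge (P i ω) (b i ω) with h | h
    · rw [if_pos h]; exact le_trans h.le (hrange i ω).2
    · rw [if_neg (not_lt.mpr h)]; linarith
  have hrevint : ∀ i, Integrable (fun ω => if P i ω < b i ω then P i ω else 0) μ := fun i =>
    (integrable_const H).mono' (hrevm i).aestronglyMeasurable
      (Filter.Eventually.of_forall fun ω => by rw [Real.norm_eq_abs]; exact hrevbd i ω)
  have hbint : ∀ i, Integrable (b i) μ := fun i =>
    (integrable_const H).mono' (hbmeas i).aestronglyMeasurable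
      (Filter.Eventually.of_forall fun ω => by
        rw [Real.norm_eq_abs, abs_of_nonneg (le_trans zero_le_one (hrange i ω).1)]
        exact (hrange i ω).2)
  have hlpos : 0 < Real.log H + 1 := by linarith [Real.log_nonneg hH.le]
  have h1 : (∫ ω, ∑ i, (if P i ω < b i ω then P i ω else 0) ∂μ) ≤ n := by
    rw [integral_finset_sum _ (fun i _ => hrevint i)]
    calc ∑ i, ∫ ω, (if P i ω < b i ω then P i ω else 0) ∂μ
        ≤ ∑ _i : Fin n, (1:ℝ) := Finset.sum_le_sum fun i _ =>
          rev_le_one μ H hH (b i) (P i) (hbmeas i) (hPmeas i) (hrange i) (htail i)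
            (hPpos i) (hindep i)
      _ = n := by simp
  have h2 : (∫ ω, ∑ i, b i ω ∂μ) = n * (Real.log H + 1) := by
    rw [integral_finset_sum _ (fun i _ => hbint i)]
    rw [Finset.sum_congr rfl fun i _ => exp_bid μ H hH (b i) (hbmeas i) (hrange i) (htail i)]
    simp [Finset.sum_const, nsmul_eq_mul]
    ring
  refine ⟨h1, h2, ?_⟩
  by_contra hcon
  push_neg at hcon
  have hgint : Integrable (fun ω => (∑ i, b i ω) / (Real.log H + 1)) μ :=
    (integrable_finset_sum _ (fun i _ => hbint i)).div_const _
  have hrint : Integrable (fun ω => ∑ i, (if P i ω < b i ω then P i ω else 0)) μ :=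
    integrable_finset_sum _ fun i _ => hrevint i
  have hdiff : Integrable
      (fun ω => (∑ i, (if P i ω < b i ω then P i ω else 0)) -
        (∑ i, b i ω) / (Real.log H + 1)) μ := hrint.sub hgint
  have hnn : ∀ ω, 0 ≤ (∑ i, (if P i ω < b i ω then P i ω else 0)) -
      (∑ i, b i ω) / (Real.log H + 1) := fun ω => le_of_lt (sub_pos.mpr (hcon ω))
  have hig : (∫ ω, (∑ i, b i ω) / (Real.log H + 1) ∂μ) = n := by
    rw [integral_div, h2]
    field_simp
  have h0 : (∫ ω, ((∑ i, (if P i ω < b i ω then P i ω else 0)) -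
      (∑ i, b i ω) / (Real.log H + 1)) ∂μ) = 0 := by
    apply le_antisymm
    · rw [integral_sub hrint hgint, hig]
      linarith
    · exact integral_nonneg hnn
  have hae := (integral_eq_zero_iff_of_nonneg hnn hdiff).1 h0
  haveI : (ae μ).NeBot := ae_neBot.mpr (IsProbabilityMeasure.ne_zero μ)
  obtain ⟨ω, hω⟩ := hae.exists
  have := hcon ω
  simp only [Pi.zero_apply] at hω
  linarith
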